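/- Let V be a finite set, G a directed acyclic graph on V, and (X_v)_{v∈V} a family of random variables on a probability space (Ω, 𝓕, P), each valued in a nonempty finite type, satisfying the Markov condition with respect to G. Then the joint distribution factorizes according to G: for every assignment (x_v)_{v∈V} of values, P(⋂_{v∈V} {X_v = x_v}) · ∏_{v∈V} P(⋂_{u∈Pa(v)} {X_u = x_u}) = ∏_{v∈V} P({X_v = x_v} ∩ ⋂_{u∈Pa(v)} {X_u = x_u}); equivalently, whenever every conditioning event ⋂_{u∈Pa(v)}{X_u = x_u} has positive probability, P(⋂_{v∈V} {X_v = x_v}) = ∏_{v∈V} P(X_v = x_v ∣ X_u = x_u for all u ∈ Pa(v)). -/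

import Mathlib

open MeasureTheory ProbabilityTheory Set

namespace CFS

variable {V : Type*}

/-- Parents of `v`: vertices with an edge into `v`. -/
def Pa (E : V → V → Prop) (v : V) : Set V := {u | E u v}

/-- Children of `v`: vertices with an edge from `v`. -/
def Ch (E : V → V → Prop) (v : V) : Set V := {u | E v u}

/-- Descendants of `v`: vertices reachable from `v` by a nonempty directed path. -/
def Desc (E : V → V → Prop) (v : V) : Set V := {u | Relation.TransGen E v u}

/-- Spouses of `v`: the other parents of the children of `v`. -/
def Sp (E : V → V → Prop) (v : V) : Set V := {u | u ≠ v ∧ ∃ w, E u w ∧ E v w}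

/-- The Markov blanket set `mb(v)` in the graph: parents, children and spouses. -/
def mb (E : V → V → Prop) (v : V) : Set V := Pa E v ∪ Ch E v ∪ Sp E v

/-- The edge relation is acyclic (defines a DAG). -/
def Acyclic (E : V → V → Prop) : Prop := ∀ v, ¬ Relation.TransGen E v v

/-- Adjacency: an edge in either direction. -/
def Adj (E : V → V → Prop) (u v : V) : Prop := E u v ∨ E v u

/-- `f 0, f 1, …, f n` is an undirected path between `i` and `j`:
distinct vertices, consecutive ones adjacent. -/
structure IsUPath (E : V → V → Prop) (i j : V) (n : ℕ) (f : ℕ → V) : Prop where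
  pos : 0 < n
  start : f 0 = i
  finish : f n = j
  inj : ∀ s ≤ n, ∀ t ≤ n, f s = f t → s = t
  adj : ∀ t < n, Adj E (f t) (f (t + 1))

/-- The interior vertex at position `t` of the path `f` is a collider:
both incident edges of the path point into it. -/
def ColliderAt (E : V → V → Prop) (f : ℕ → V) (t : ℕ) : Prop :=
  E (f (t - 1)) (f t) ∧ E (f (t + 1)) (f t)

/-- The path `f 0, …, f n` is blocked by `S`: some interior non-collider lies in `S`,
or some interior collider is such that neither it nor any of its descendants lies in `S`. -/
def Blocked (E : V → V → Prop) (S : Set V) (n : ℕ) (f : ℕ → V) : Prop :=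
  ∃ t, 0 < t ∧ t < n ∧
    ((¬ ColliderAt E f t ∧ f t ∈ S) ∨
      (ColliderAt E f t ∧ f t ∉ S ∧ ∀ d ∈ Desc E (f t), d ∉ S))

/-- `i` and `j` are d-separated by `S`: every undirected path between them is blocked by `S`. -/
def DSep (E : V → V → Prop) (i j : V) (S : Set V) : Prop :=
  ∀ n f, IsUPath E i j n f → Blocked E S n f

/-- The sets `A` and `B` are d-separated by `S`. -/
def DSepSet (E : V → V → Prop) (A B S : Set V) : Prop :=
  ∀ i ∈ A, ∀ j ∈ B, DSep E i j S

variable {Ω Val : Type*} [mΩ : MeasurableSpace Ω] [MeasurableSpace Val]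

/-- The σ-algebra generated by the family of random variables `(X v)_{v ∈ A}`. -/
def famSigma (X : V → Ω → Val) (A : Set V) : MeasurableSpace Ω :=
  ⨆ v ∈ A, MeasurableSpace.comap (X v) inferInstance

theorem famSigma_le {X : V → Ω → Val} (hX : ∀ v, Measurable (X v)) (A : Set V) :
    famSigma X A ≤ mΩ :=
  iSup₂_le fun v _ => (hX v).comap_le

/-- The families `(X a)_{a ∈ A}` and `(X b)_{b ∈ B}` are conditionally independent
given the family `(X s)_{s ∈ S}`. -/
def CondIndepFam [StandardBorelSpace Ω] (X : V → Ω → Val) (hX : ∀ v, Measurable (X v))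
    (P : Measure Ω) [IsFiniteMeasure P] (S A B : Set V) : Prop :=
  CondIndep (famSigma X S) (famSigma X A) (famSigma X B) (famSigma_le hX S) P

/-- The Markov condition: every variable is conditionally independent of its
non-descendants (other than itself and its parents) given its parents. -/
def MarkovCondition [StandardBorelSpace Ω] (E : V → V → Prop) (X : V → Ω → Val)
    (hX : ∀ v, Measurable (X v)) (P : Measure Ω) [IsFiniteMeasure P] : Prop :=
  ∀ v, CondIndepFam X hX P (Pa E v) {v} (univ \ ({v} ∪ Desc E v ∪ Pa E v))

/-- `M ⊆ V \ {C}` is a Markov blanket of `C`: conditioned on `(X m)_{m ∈ M}`,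
all other variables are independent of `X C`. -/
def IsMarkovBlanket [StandardBorelSpace Ω] (X : V → Ω → Val) (hX : ∀ v, Measurable (X v))
    (P : Measure Ω) [IsFiniteMeasure P] (C : V) (M : Set V) : Prop :=
  C ∉ M ∧ CondIndepFam X hX P M {C} (univ \ (M ∪ {C}))

/-- A Markov boundary of `C` is a Markov blanket of `C` no proper subset of which
is a Markov blanket of `C`. -/
def IsMarkovBoundary [StandardBorelSpace Ω] (X : V → Ω → Val) (hX : ∀ v, Measurable (X v))
    (P : Measure Ω) [IsFiniteMeasure P] (C : V) (M : Set V) : Prop :=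
  IsMarkovBlanket X hX P C M ∧ ∀ M' ⊂ M, ¬ IsMarkovBlanket X hX P C M'

/-- Faithfulness: conditional independence holds exactly when d-separation holds. -/
def Faithful [StandardBorelSpace Ω] (E : V → V → Prop) (X : V → Ω → Val)
    (hX : ∀ v, Measurable (X v)) (P : Measure Ω) [IsFiniteMeasure P] : Prop :=
  ∀ A B S : Set V, A.Nonempty → B.Nonempty →
    Disjoint A B → Disjoint A S → Disjoint B S →
    (CondIndepFam X hX P S A B ↔ DSepSet E A B S)

/-- `v` is strongly relevant to `C`: `X C` and `X v` are not conditionally independent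
given all the remaining variables. -/
def StronglyRelevant [StandardBorelSpace Ω] (X : V → Ω → Val) (hX : ∀ v, Measurable (X v))
    (P : Measure Ω) [IsFiniteMeasure P] (C v : V) : Prop :=
  ¬ CondIndepFam X hX P (univ \ {C, v}) {C} {v}

end CFS

open CFS

section Aux

open MeasureTheory ProbabilityTheory Set CFS

variable {V Ω Val : Type*}

/-- Any set measurable w.r.t. `famSigma X S` either contains the atom
`⋂ u ∈ S, X u ⁻¹' {x u}` or is disjoint from it. -/
lemma atom_subset_or_disjoint [MeasurableSpace Val] (X : V → Ω → Val) (S : Set V) (x : V → Val)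
    {t : Set Ω} (ht : MeasurableSet[famSigma X S] t) :
    (⋂ u ∈ S, X u ⁻¹' {x u}) ⊆ t ∨ (⋂ u ∈ S, X u ⁻¹' {x u}) ∩ t = ∅ := by
  set c : Set Ω := ⋂ u ∈ S, X u ⁻¹' {x u} with hc
  let M : MeasurableSpace Ω :=
  { MeasurableSet' := fun t => c ⊆ t ∨ c ∩ t = ∅
    measurableSet_empty := Or.inr (Set.inter_empty c)
    measurableSet_compl := by
      rintro s (h | h)
      · right
        ext ω; simp only [Set.mem_inter_iff, Set.mem_compl_iff, Set.mem_empty_iff_false,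
          iff_false, not_and, not_not]
        exact fun hω => h hω
      · left
        intro ω hω hω'
        exact (Set.eq_empty_iff_forall_notMem.1 h) ω ⟨hω, hω'⟩
    measurableSet_iUnion := by
      intro f hf
      by_cases h : ∃ i, c ⊆ f i
      · obtain ⟨i, hi⟩ := h
        exact Or.inl (hi.trans (Set.subset_iUnion f i))
      · push_neg at h
        right
        ext ω; simp only [Set.mem_inter_iff, Set.mem_iUnion, Set.mem_empty_iff_false, iff_false,
          not_and, not_exists]
        intro hω i hωi
        rcases hf i with h' | h'
        · exact h i h'
        · exact (Set.eq_empty_iff_forall_notMem.1 h') ω ⟨hω, hωi⟩ }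
  have hle : famSigma X S ≤ M := by
    refine iSup₂_le fun u hu => ?_
    rintro s ⟨B, -, rfl⟩
    by_cases hxB : x u ∈ B
    · left
      intro ω hω
      have : X u ω = x u := by
        have := Set.mem_iInter₂.1 (hc ▸ hω)
        simpa using this u hu
      simpa [Set.mem_preimage, this] using hxB
    · right
      ext ω; simp only [Set.mem_inter_iff, Set.mem_preimage, Set.mem_empty_iff_false, iff_false,
        not_and]
      intro hω hωB
      have : X u ω = x u := by
        have := Set.mem_iInter₂.1 (hc ▸ hω)
        simpa using this u hu
      exact hxB (this ▸ hωB)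
  exact hle t ht

/-- A `famSigma X S`-strongly measurable real function is constant on the atom. -/
lemma const_on_atom [MeasurableSpace Val] {X : V → Ω → Val} {S : Set V} {x : V → Val}
    {f : Ω → ℝ} (hf : StronglyMeasurable[famSigma X S] f)
    {ω ω' : Ω} (hω : ω ∈ ⋂ u ∈ S, X u ⁻¹' {x u}) (hω' : ω' ∈ ⋂ u ∈ S, X u ⁻¹' {x u}) :
    f ω = f ω' := by
  have ht : MeasurableSet[famSigma X S] (f ⁻¹' {f ω}) :=
    hf.measurable (measurableSet_singleton (f ω))
  rcases atom_subset_or_disjoint X S x ht with h | h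
  · exact (h hω').symm
  · exact absurd (Set.eq_empty_iff_forall_notMem.1 h ω ⟨hω, rfl⟩) (by simp)

lemma measurableSet_famSigma [MeasurableSpace Val] {X : V → Ω → Val} {A : Set V} {v : V}
    (hv : v ∈ A) {B : Set Val} (hB : MeasurableSet B) :
    MeasurableSet[famSigma X A] (X v ⁻¹' B) := by
  have h : MeasurableSpace.comap (X v) inferInstance ≤ famSigma X A :=
    le_iSup₂ (f := fun u (_ : u ∈ A) => MeasurableSpace.comap (X u) inferInstance) v hv
  exact h _ ⟨B, hB, rfl⟩

lemma measurableSet_famSigma_biInter [Countable V] [MeasurableSpace Val]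
    [MeasurableSingletonClass Val] {X : V → Ω → Val} {A S : Set V} (hSA : S ⊆ A) (x : V → Val) :
    MeasurableSet[famSigma X A] (⋂ u ∈ S, X u ⁻¹' {x u}) :=
  MeasurableSet.biInter (Set.to_countable S)
    (fun u hu => measurableSet_famSigma (hSA hu) (measurableSet_singleton (x u)))

/-- The key consequence of conditional independence on atoms of the conditioning σ-algebra. -/
lemma ci_atom [Countable V] [mΩ : MeasurableSpace Ω] [StandardBorelSpace Ω] [MeasurableSpace Val]
    [MeasurableSingletonClass Val]
    {X : V → Ω → Val} (hX : ∀ v, Measurable (X v)) {P : Measure Ω} [IsProbabilityMeasure P]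
    {S A B : Set V} (h : CondIndepFam X hX P S A B) (x : V → Val)
    {a b : Set Ω} (ha : MeasurableSet[famSigma X A] a) (hb : MeasurableSet[famSigma X B] b) :
    P (a ∩ b ∩ ⋂ u ∈ S, X u ⁻¹' {x u}) * P (⋂ u ∈ S, X u ⁻¹' {x u})
      = P (a ∩ ⋂ u ∈ S, X u ⁻¹' {x u}) * P (b ∩ ⋂ u ∈ S, X u ⁻¹' {x u}) := by
  set c : Set Ω := ⋂ u ∈ S, X u ⁻¹' {x u} with hcdef
  have hc' : MeasurableSet[famSigma X S] c :=
    measurableSet_famSigma_biInter (le_refl S) x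
  have hc : MeasurableSet c := famSigma_le hX S c hc'
  have ha' : MeasurableSet a := famSigma_le hX A a ha
  have hb' : MeasurableSet b := famSigma_le hX B b hb
  by_cases hPc : P c = 0
  · have h1 : P (a ∩ b ∩ c) = 0 :=
      le_antisymm (le_trans (measure_mono Set.inter_subset_right) hPc.le) zero_le
    have h2 : P (a ∩ c) = 0 :=
      le_antisymm (le_trans (measure_mono Set.inter_subset_right) hPc.le) zero_le
    rw [h1, h2, hPc, zero_mul, zero_mul]
  -- the conditional independence statement
  rw [CondIndepFam, condIndep_iff _ _ _ _ (famSigma_le hX A) (famSigma_le hX B)] at h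
  have hcond := h a b ha hb
  -- pick a point of c
  have hcne : c.Nonempty := by
    rcases Set.eq_empty_or_nonempty c with h0 | h0
    · exact absurd (h0 ▸ measure_empty) hPc
    · exact h0
  obtain ⟨ω₀, hω₀⟩ := hcne
  set f : Ω → ℝ := P⟦a | famSigma X S⟧ with hfdef
  set g : Ω → ℝ := P⟦b | famSigma X S⟧ with hgdef
  set k : Ω → ℝ := P⟦a ∩ b | famSigma X S⟧ with hkdef
  have hfm : StronglyMeasurable[famSigma X S] f := stronglyMeasurable_condExp
  have hgm : StronglyMeasurable[famSigma X S] g := stronglyMeasurable_condExp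
  have hkm : StronglyMeasurable[famSigma X S] k := stronglyMeasurable_condExp
  -- set integrals of condexp over c
  have hint : ∀ s : Set Ω, MeasurableSet s →
      ∫ ω in c, (P⟦s | famSigma X S⟧) ω ∂P = (P (s ∩ c)).toReal := by
    intro s hs
    have hInt : Integrable (s.indicator fun _ => (1 : ℝ)) P :=
      (integrable_const (1 : ℝ)).indicator hs
    rw [setIntegral_condExp (famSigma_le hX S) hInt hc']
    have : ∫ ω in c, s.indicator (fun _ => (1 : ℝ)) ω ∂P
        = ((P.restrict c) s).toReal • (1 : ℝ) := integral_indicator_const (1 : ℝ) hs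
    rw [this, Measure.restrict_apply hs, smul_eq_mul, mul_one]
  -- constants on c
  have hconstf : ∀ ω ∈ c, f ω = f ω₀ := fun ω hω => const_on_atom hfm hω hω₀
  have hconstg : ∀ ω ∈ c, g ω = g ω₀ := fun ω hω => const_on_atom hgm hω hω₀
  have hconstk : ∀ ω ∈ c, k ω = k ω₀ := fun ω hω => const_on_atom hkm hω hω₀
  have hIf : f ω₀ * (P c).toReal = (P (a ∩ c)).toReal := by
    have h1 : ∫ ω in c, f ω ∂P = ∫ _ in c, f ω₀ ∂P :=
      setIntegral_congr_fun hc (fun ω hω => hconstf ω hω)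
    have h2 : ∫ _ in c, f ω₀ ∂P = (P c).toReal • f ω₀ := setIntegral_const _
    have h3 := hint a ha'
    rw [h1, h2, smul_eq_mul, mul_comm] at h3
    exact h3
  have hIg : g ω₀ * (P c).toReal = (P (b ∩ c)).toReal := by
    have h1 : ∫ ω in c, g ω ∂P = ∫ _ in c, g ω₀ ∂P :=
      setIntegral_congr_fun hc (fun ω hω => hconstg ω hω)
    have h2 : ∫ _ in c, g ω₀ ∂P = (P c).toReal • g ω₀ := setIntegral_const _
    have h3 := hint b hb'
    rw [h1, h2, smul_eq_mul, mul_comm] at h3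
    exact h3
  have hIk : k ω₀ * (P c).toReal = (P ((a ∩ b) ∩ c)).toReal := by
    have h1 : ∫ ω in c, k ω ∂P = ∫ _ in c, k ω₀ ∂P :=
      setIntegral_congr_fun hc (fun ω hω => hconstk ω hω)
    have h2 : ∫ _ in c, k ω₀ ∂P = (P c).toReal • k ω₀ := setIntegral_const _
    have h3 := hint (a ∩ b) (ha'.inter hb')
    rw [h1, h2, smul_eq_mul, mul_comm] at h3
    exact h3
  -- there is a point of c where the a.e. identity holds
  have hpoint : ∃ ω₁ ∈ c, k ω₁ = f ω₁ * g ω₁ := by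
    by_contra hcon
    push_neg at hcon
    have hsub : c ⊆ {ω | ¬ k ω = (f * g) ω} := fun ω hω h => hcon ω hω (by simpa using h)
    have hle : P c ≤ P {ω | ¬ k ω = (f * g) ω} := measure_mono hsub
    have hnull : P {ω | ¬ k ω = (f * g) ω} = 0 := ae_iff.1 hcond
    exact hPc (le_antisymm (hnull ▸ hle) zero_le)
  obtain ⟨ω₁, hω₁, hω₁eq⟩ := hpoint
  have hkfg : k ω₀ = f ω₀ * g ω₀ := by
    rw [← hconstk ω₁ hω₁, hω₁eq, hconstf ω₁ hω₁, hconstg ω₁ hω₁]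
  -- put it together
  have key : (P ((a ∩ b) ∩ c)).toReal * (P c).toReal
      = (P (a ∩ c)).toReal * (P (b ∩ c)).toReal := by
    rw [← hIf, ← hIg, ← hIk, hkfg]; ring
  rw [← ENNReal.toReal_mul, ← ENNReal.toReal_mul] at key
  exact (ENNReal.toReal_eq_toReal_iff'
    (ENNReal.mul_ne_top (measure_ne_top _ _) (measure_ne_top _ _))
    (ENNReal.mul_ne_top (measure_ne_top _ _) (measure_ne_top _ _))).1 key

/-- Factorization over any parent-closed finite set of vertices. -/
lemma factor_aux [Fintype V] [mΩ : MeasurableSpace Ω] [StandardBorelSpace Ω]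
    [MeasurableSpace Val] [MeasurableSingletonClass Val]
    (E : V → V → Prop) (hE : Acyclic E)
    (X : V → Ω → Val) (hX : ∀ v, Measurable (X v))
    (P : Measure Ω) [IsProbabilityMeasure P]
    (hMarkov : MarkovCondition E X hX P) (x : V → Val) :
    ∀ s : Finset V, (∀ v ∈ s, ∀ u, E u v → u ∈ s) →
      P (⋂ v ∈ s, X v ⁻¹' {x v}) * ∏ v ∈ s, P (⋂ u ∈ Pa E v, X u ⁻¹' {x u})
        = ∏ v ∈ s, P (X v ⁻¹' {x v} ∩ ⋂ u ∈ Pa E v, X u ⁻¹' {x u}) := by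
  classical
  intro s
  induction s using Finset.strongInduction with
  | _ s ih =>
    intro hcl
    rcases s.eq_empty_or_nonempty with rfl | hne
    · simp
    -- find a maximal element of s
    have hirr : IsIrrefl V (fun a b => Relation.TransGen E b a) := ⟨fun a => hE a⟩
    have htr : IsTrans V (fun a b => Relation.TransGen E b a) :=
      ⟨fun _ _ _ hab hbc => hbc.trans hab⟩
    have hwf : WellFounded (fun a b : V => Relation.TransGen E b a) :=
      Finite.wellFounded_of_trans_of_irrefl _
    obtain ⟨v, hvs, hmax⟩ := hwf.has_min ↑s (by exact_mod_cast hne)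
    have hvs' : v ∈ s := hvs
    have hmax' : ∀ w ∈ s, ¬ Relation.TransGen E v w := fun w hw hvw => hmax w hw hvw
    set s' : Finset V := s.erase v with hs'def
    have hPas : Pa E v ⊆ ↑s' := by
      intro u hu
      have hus : u ∈ s := hcl v hvs' u hu
      have huv : u ≠ v := by
        rintro rfl
        exact hE _ (Relation.TransGen.single hu)
      exact Finset.mem_coe.2 (Finset.mem_erase.2 ⟨huv, hus⟩)
    have hcl' : ∀ w ∈ s', ∀ u, E u w → u ∈ s' := by
      intro w hw u huw
      have hws : w ∈ s := Finset.mem_of_mem_erase hw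
      have hus : u ∈ s := hcl w hws u huw
      refine Finset.mem_erase.2 ⟨?_, hus⟩
      rintro rfl
      exact hmax' w hws (Relation.TransGen.single huw)
    set D : Set V := ↑s' \ Pa E v with hDdef
    have hDsub : D ⊆ univ \ ({v} ∪ Desc E v ∪ Pa E v) := by
      rintro w ⟨hw1, hw2⟩
      refine ⟨trivial, ?_⟩
      rintro (h | h)
      · rcases h with h | h
        · have : w = v := h
          exact (Finset.mem_erase.1 hw1).1 this
        · exact hmax' w (Finset.mem_of_mem_erase hw1) h
      · exact hw2 h
    -- sets
    set Av : Set Ω := X v ⁻¹' {x v} with hAv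
    set cv : Set Ω := ⋂ u ∈ Pa E v, X u ⁻¹' {x u} with hcv
    set Bv : Set Ω := ⋂ w ∈ D, X w ⁻¹' {x w} with hBv
    have hs'union : (↑s' : Set V) = D ∪ Pa E v := (Set.diff_union_of_subset hPas).symm
    have hBcv : Bv ∩ cv = ⋂ w ∈ s', X w ⁻¹' {x w} := by
      rw [← Finset.set_biInter_coe, hs'union, Set.biInter_union]
    have hscup : ⋂ w ∈ s, X w ⁻¹' {x w} = Av ∩ (Bv ∩ cv) := by
      rw [hBcv, ← Finset.insert_erase hvs', Finset.set_biInter_insert]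
    -- conditional independence step
    have hmA : MeasurableSet[famSigma X {v}] Av :=
      measurableSet_famSigma (Set.mem_singleton v) (measurableSet_singleton (x v))
    have hmB : MeasurableSet[famSigma X (univ \ ({v} ∪ Desc E v ∪ Pa E v))] Bv :=
      measurableSet_famSigma_biInter hDsub x
    have hci := ci_atom hX (hMarkov v) x hmA hmB
    -- hci : P (Av ∩ Bv ∩ cv) * P cv = P (Av ∩ cv) * P (Bv ∩ cv)
    have hih := ih s' (Finset.erase_ssubset hvs') hcl'
    -- now combine
    have hins : s = insert v s' := (Finset.insert_erase hvs').symm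
    have hvns' : v ∉ s' := Finset.notMem_erase v s
    rw [hscup, hins, Finset.prod_insert hvns', Finset.prod_insert hvns']
    have hassoc : Av ∩ (Bv ∩ cv) = Av ∩ Bv ∩ cv := (Set.inter_assoc Av Bv cv).symm
    calc P (Av ∩ (Bv ∩ cv)) *
          (P cv * ∏ w ∈ s', P (⋂ u ∈ Pa E w, X u ⁻¹' {x u}))
        = (P (Av ∩ Bv ∩ cv) * P cv) * ∏ w ∈ s', P (⋂ u ∈ Pa E w, X u ⁻¹' {x u}) := by
          rw [hassoc, mul_assoc]
      _ = (P (Av ∩ cv) * P (Bv ∩ cv)) * ∏ w ∈ s', P (⋂ u ∈ Pa E w, X u ⁻¹' {x u}) := by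
          rw [hci]
      _ = P (Av ∩ cv) * (P (⋂ w ∈ s', X w ⁻¹' {x w}) *
            ∏ w ∈ s', P (⋂ u ∈ Pa E w, X u ⁻¹' {x u})) := by
          rw [hBcv, mul_assoc]
      _ = P (Av ∩ cv) * ∏ w ∈ s', P (X w ⁻¹' {x w} ∩ ⋂ u ∈ Pa E w, X u ⁻¹' {x u}) := by
          rw [hih]

end Aux

/-- A family of random variables satisfying the Markov condition w.r.t. a DAG
factorizes according to the DAG. -/
theorem stmt_0
    {V Ω Val : Type*} [Fintype V] [MeasurableSpace Ω] [StandardBorelSpace Ω]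
    [MeasurableSpace Val] [DiscreteMeasurableSpace Val] [Fintype Val] [Nonempty Val]
    (E : V → V → Prop) (hE : Acyclic E)
    (X : V → Ω → Val) (hX : ∀ v, Measurable (X v))
    (P : MeasureTheory.Measure Ω) [MeasureTheory.IsProbabilityMeasure P]
    (hMarkov : MarkovCondition E X hX P)
    (x : V → Val) :
    (P (⋂ v, X v ⁻¹' {x v}) * ∏ v, P (⋂ u ∈ Pa E v, X u ⁻¹' {x u}) =
      ∏ v, P (X v ⁻¹' {x v} ∩ ⋂ u ∈ Pa E v, X u ⁻¹' {x u})) ∧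
    ((∀ v, 0 < P (⋂ u ∈ Pa E v, X u ⁻¹' {x u})) →
      P (⋂ v, X v ⁻¹' {x v}) =
        ∏ v, ProbabilityTheory.cond P (⋂ u ∈ Pa E v, X u ⁻¹' {x u}) (X v ⁻¹' {x v})) := by
  classical
  have hmain := factor_aux E hE X hX P hMarkov x Finset.univ
    (fun v _ u _ => Finset.mem_univ u)
  have hUniv : (⋂ v ∈ Finset.univ, X v ⁻¹' {x v} : Set Ω) = ⋂ v, X v ⁻¹' {x v} := by
    simp
  rw [hUniv] at hmain
  refine ⟨hmain, ?_⟩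
  intro hpos
  have hcm : ∀ v : V, MeasurableSet (⋂ u ∈ Pa E v, X u ⁻¹' {x u}) := fun v =>
    MeasurableSet.biInter (Set.to_countable _) fun u _ => (hX u) (measurableSet_singleton _)
  have hcond : ∀ v : V, ProbabilityTheory.cond P (⋂ u ∈ Pa E v, X u ⁻¹' {x u}) (X v ⁻¹' {x v})
      = (P (⋂ u ∈ Pa E v, X u ⁻¹' {x u}))⁻¹
        * P (X v ⁻¹' {x v} ∩ ⋂ u ∈ Pa E v, X u ⁻¹' {x u}) := by
    intro v
    rw [ProbabilityTheory.cond_apply (hcm v), Set.inter_comm]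
  set p := ∏ v : V, P (⋂ u ∈ Pa E v, X u ⁻¹' {x u}) with hp
  have hp0 : p ≠ 0 := Finset.prod_ne_zero_iff.2 fun v _ => (hpos v).ne'
  have hptop : p ≠ ⊤ := ENNReal.prod_ne_top fun v _ => measure_ne_top _ _
  have hprod : (∏ v : V, ProbabilityTheory.cond P (⋂ u ∈ Pa E v, X u ⁻¹' {x u})
        (X v ⁻¹' {x v})) * p
      = ∏ v : V, P (X v ⁻¹' {x v} ∩ ⋂ u ∈ Pa E v, X u ⁻¹' {x u}) := by
    rw [hp, ← Finset.prod_mul_distrib]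
    refine Finset.prod_congr rfl fun v _ => ?_
    rw [hcond v, mul_comm ((P (⋂ u ∈ Pa E v, X u ⁻¹' {x u}))⁻¹) _, mul_assoc,
      ENNReal.inv_mul_cancel (hpos v).ne' (measure_ne_top _ _), mul_one]
  have heq : P (⋂ v, X v ⁻¹' {x v}) * p
      = (∏ v : V, ProbabilityTheory.cond P (⋂ u ∈ Pa E v, X u ⁻¹' {x u})
          (X v ⁻¹' {x v})) * p := hmain.trans hprod.symm
  have hc := congrArg (· * p⁻¹) heq
  simp only [mul_assoc, ENNReal.mul_inv_cancel hp0 hptop, mul_one] at hc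
  exact hc
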